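/- Fix classes 1,…,n with rates λ_1,…,λ_n > 0 and a cutoff class k. Let S be a nonnegative real random variable, and conditionally on S let the counts N_1,…,N_n be mutually independent with N_i ~ Poisson(λ_i·S). Let ((O^{(i,j)}, A^{(i,j)}))_{i<k, j≥1} be i.i.d. random elements of ℝ_{≥0} × ℕ^n, independent of (S, N_1,…,N_n), with common joint transform g(θ, z) = E[e^{−θ·O}·∏_{l=1}^n z_l^{A_l}]. Define R = S + Σ_{i<k} Σ_{j=1}^{N_i} O^{(i,j)} and, for each l, A_l = N_l + Σ_{i<k} Σ_{j=1}^{N_i} A^{(i,j)}_l. Then for all θ ≥ 0 and z ∈ [0,1]^n: E[e^{−θR} ∏_{l=1}^n z_l^{A_l}] = S̃(θ + Σ_{i≥k} λ_i(1−z_i) + Σ_{i<k} λ_i(1 − z_i·g(θ, z))). -/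

import Mathlib

open MeasureTheory ProbabilityTheory Real Finset

open scoped ENNReal NNReal Nat

section Aux

variable {Ω : Type*} [MeasurableSpace Ω]

lemma meas_apply_nat {α : Type*} [MeasurableSpace α] {g : Ω → ℕ} (hg : Measurable g)
    {F : ℕ → Ω → α} (hF : ∀ m, Measurable (F m)) : Measurable fun ω => F (g ω) ω := by
  intro t ht
  have : (fun ω => F (g ω) ω) ⁻¹' t = ⋃ m, g ⁻¹' {m} ∩ F m ⁻¹' t := by
    ext ω; simp [Set.mem_iUnion, eq_comm]
  rw [this]
  exact MeasurableSet.iUnion fun m => (hg (measurableSet_singleton m)).inter (hF m ht)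

lemma measurable_sum_range {M : Type*} [AddCommMonoid M] [MeasurableSpace M]
    [MeasurableAdd₂ M] {g : Ω → ℕ} (hg : Measurable g) {f : ℕ → Ω → M}
    (hf : ∀ j, Measurable (f j)) :
    Measurable fun ω => ∑ j ∈ Finset.range (g ω), f j ω :=
  meas_apply_nat hg (fun m => Finset.measurable_sum _ (fun j _ => hf j))

lemma prod_fin_ite {M : Type*} [CommMonoid M] {m t : ℕ} (ht : t ≤ m) (h : ℕ → M) :
    (∏ j : Fin m, if (j : ℕ) < t then h (j : ℕ) else 1) = ∏ j ∈ Finset.range t, h j := by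
  rw [Fin.prod_univ_eq_prod_range (fun j => if j < t then h j else 1) m,
    ← Finset.prod_filter]
  have : Finset.filter (fun j => j < t) (Finset.range m) = Finset.range t := by
    ext j; simp only [Finset.mem_filter, Finset.mem_range]; omega
  rw [this]

lemma lintegral_fin_nat_prod_eq_prod {n : ℕ} {X : Type*} [MeasurableSpace X]
    (μ : Measure X) [SigmaFinite μ] {f : Fin n → X → ℝ≥0∞} (hf : ∀ i, Measurable (f i)) :
    ∫⁻ x : Fin n → X, ∏ i, f i (x i) ∂(Measure.pi fun _ => μ) = ∏ i, ∫⁻ x, f i x ∂μ := by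
  induction n with
  | zero => simp
  | succ n ih =>
    have hmp := measurePreserving_piFinSuccAbove (fun _ : Fin (n + 1) => μ) 0
    have he : Measurable (MeasurableEquiv.piFinSuccAbove (fun _ : Fin (n + 1) => X) 0) :=
      (MeasurableEquiv.piFinSuccAbove _ 0).measurable
    have hprod : Measurable fun y : X × (Fin n → X) =>
        f 0 y.1 * ∏ i : Fin n, f (Fin.succ i) (y.2 i) := by
      refine ((hf 0).comp measurable_fst).mul ?_
      exact Finset.measurable_prod _ fun i _ =>
        (hf _).comp ((measurable_pi_apply i).comp measurable_snd)
    calc ∫⁻ x : Fin (n + 1) → X, ∏ i, f i (x i) ∂(Measure.pi fun _ => μ)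
        = ∫⁻ y : X × (Fin n → X), f 0 y.1 * ∏ i : Fin n, f (Fin.succ i) (y.2 i)
            ∂(μ.prod (Measure.pi fun _ : Fin n => μ)) := by
          rw [← hmp.map_eq, lintegral_map hprod he]
          congr 1
          ext x
          rw [Fin.prod_univ_succ]
          simp [MeasurableEquiv.piFinSuccAbove_symm_apply, MeasurableEquiv.piFinSuccAbove,
            Fin.zero_succAbove, Fin.tail]
      _ = (∫⁻ x, f 0 x ∂μ) *
            ∫⁻ y : Fin n → X, ∏ i : Fin n, f (Fin.succ i) (y i)
              ∂(Measure.pi fun _ : Fin n => μ) :=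
          lintegral_prod_mul (hf 0).aemeasurable
            (Finset.measurable_prod _ fun i _ =>
              (hf _).comp (measurable_pi_apply i)).aemeasurable
      _ = ∏ i, ∫⁻ x, f i x ∂μ := by
          rw [ih (f := fun i => f (Fin.succ i)) (fun i => hf (Fin.succ i)), Fin.prod_univ_succ]

lemma lintegral_fintype_prod_eq_prod {ι : Type*} [Fintype ι] {X : Type*} [MeasurableSpace X]
    (μ : Measure X) [SigmaFinite μ] {f : ι → X → ℝ≥0∞} (hf : ∀ i, Measurable (f i)) :
    ∫⁻ x : ι → X, ∏ i, f i (x i) ∂(Measure.pi fun _ => μ) = ∏ i, ∫⁻ x, f i x ∂μ := by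
  let e := (Fintype.equivFin ι).symm
  have hmp := MeasureTheory.measurePreserving_piCongrLeft (fun _ : ι => μ) e
  have hI : Measurable fun x : ι → X => ∏ i, f i (x i) :=
    Finset.measurable_prod _ fun i _ => (hf i).comp (measurable_pi_apply i)
  rw [← hmp.map_eq, lintegral_map hI (MeasurableEquiv.piCongrLeft (fun _ => X) e).measurable]
  have key : ∀ x : Fin (Fintype.card ι) → X,
      (∏ i, f i ((MeasurableEquiv.piCongrLeft (fun _ => X) e) x i)) =
        ∏ j, f (e j) (x j) := by
    intro x
    rw [← e.prod_comp]
    refine Finset.prod_congr rfl fun j _ => ?_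
    congr 1
    simp [MeasurableEquiv.coe_piCongrLeft, Equiv.piCongrLeft_apply_apply]
  simp_rw [key]
  rw [lintegral_fin_nat_prod_eq_prod μ (fun j => hf (e j)), ← e.prod_comp]

lemma tsum_pi_nat_prod {n : ℕ} (F : Fin n → ℕ → ℝ≥0∞) :
    ∑' f : Fin n → ℕ, ∏ i, F i (f i) = ∏ i, ∑' m, F i m := by
  induction n with
  | zero =>
    rw [tsum_eq_single (fun i => 0) (by intro f hf; exact absurd (funext fun i => i.elim0) hf)]
    simp
  | succ n ih =>
    rw [← (Fin.consEquiv (fun _ : Fin (n + 1) => ℕ)).tsum_eq]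
    have : ∀ p : ℕ × (Fin n → ℕ),
        (∏ i, F i ((Fin.consEquiv (fun _ : Fin (n+1) => ℕ)) p i))
          = F 0 p.1 * ∏ i : Fin n, F (Fin.succ i) (p.2 i) := by
      intro p
      rw [Fin.prod_univ_succ]
      rfl
    simp_rw [this]
    rw [ENNReal.tsum_prod' (f := fun p : ℕ × (Fin n → ℕ) => F 0 p.1 * ∏ i : Fin n, F (Fin.succ i) (p.2 i))]
    simp_rw [ENNReal.tsum_mul_left]
    rw [ENNReal.tsum_mul_right, ih (fun i => F (Fin.succ i)), Fin.prod_univ_succ]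

lemma poissonPMFReal_le_one (r : ℝ≥0) (m : ℕ) : poissonPMFReal r m ≤ 1 :=
  le_hasSum (poissonPMFRealSum r) m (fun _ _ => poissonPMFReal_nonneg)

lemma poisson_gen (r : ℝ≥0) (w : ℝ) :
    HasSum (fun m : ℕ => w ^ m * poissonPMFReal r m) (Real.exp (-((r : ℝ) * (1 - w)))) := by
  have h : HasSum (fun m : ℕ => ((w * (r : ℝ)) ^ m / m !)) (Real.exp (w * r)) := by
    rw [Real.exp_eq_exp_ℝ]; exact NormedSpace.expSeries_div_hasSum_exp (w * r)
  have key : ∀ m : ℕ, w ^ m * poissonPMFReal r m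
      = Real.exp (-(r : ℝ)) * ((w * (r : ℝ)) ^ m / m !) := by
    intro m; unfold poissonPMFReal; rw [mul_pow]; ring
  have h2 : Real.exp (-((r : ℝ) * (1 - w))) = Real.exp (-(r : ℝ)) * Real.exp (w * r) := by
    rw [← Real.exp_add]; congr 1; ring
  rw [h2]
  simpa only [← key] using h.mul_left (Real.exp (-(r : ℝ)))

lemma measurable_poisson_x (c : ℝ) (m : ℕ) :
    Measurable fun x : ℝ => poissonPMFReal (Real.toNNReal (c * x)) m := by
  have hc : Continuous fun x : ℝ => ((Real.toNNReal (c * x) : ℝ≥0) : ℝ) :=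
    NNReal.continuous_coe.comp (continuous_real_toNNReal.comp (continuous_const.mul continuous_id))
  have : Continuous fun x : ℝ =>
      Real.exp (-((Real.toNNReal (c * x) : ℝ≥0) : ℝ)) * ((Real.toNNReal (c * x) : ℝ≥0) : ℝ) ^ m / (m ! : ℝ) :=
    ((Real.continuous_exp.comp hc.neg).mul (hc.pow m)).div_const _
  exact this.measurable

end Aux

/-- **From the overhead-chain joint transform to the job joint transform.**
`S` is a job's original size with conditionally Poisson counts `N i` of class-`i`
arrivals during it; each class-`< k` arrival (the `j`-th class-`i` one) appends an
i.i.d. overhead chain of duration `O i j` carrying its own arrival vector `AO i j`,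
independent of `(S, N)`, with common law `ν` and joint transform `g`.  With effective
size `R = S + ∑_{i<k} ∑_{j<N i} O i j` and total arrivals
`A l = N l + ∑_{i<k} ∑_{j<N i} AO i j l`, the job joint transform is
`S̃(θ + ∑_{i≥k} λ_i(1-z_i) + ∑_{i<k} λ_i(1 - z_i g(θ,z)))`. -/
theorem job_joint_transform
    {Ω : Type*} [MeasurableSpace Ω] (μ : Measure Ω) [IsProbabilityMeasure μ]
    (n : ℕ) (lam : Fin n → ℝ) (hlam : ∀ i, 0 < lam i) (k : Fin n)
    (S : Ω → ℝ) (hS : Measurable S) (hSnonneg : ∀ ω, 0 ≤ S ω)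
    (N : Fin n → Ω → ℕ) (hN : ∀ i, Measurable (N i))
    (O : Fin n → ℕ → Ω → ℝ) (hO : ∀ i j, Measurable (O i j))
    (hOnonneg : ∀ i j ω, 0 ≤ O i j ω)
    (AO : Fin n → ℕ → Fin n → Ω → ℕ) (hAO : ∀ i j l, Measurable (AO i j l))
    -- `ν` is the common law of a single overhead chain `(duration, arrival vector)`,
    -- supported on nonnegative durations
    (ν : Measure (ℝ × (Fin n → ℕ))) [IsProbabilityMeasure ν]
    (hν : ν {p | p.1 < 0} = 0)
    -- joint law: `(S, N)` has conditionally Poisson counts given `S`, and the chains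
    -- `(O i j, AO i j)` for `i < k` are i.i.d. with common law `ν`, independent of `(S, N)`
    (hJoint : ∀ (s : Set ℝ), MeasurableSet s → ∀ (a : Fin n → ℕ) (m : ℕ)
      (B : Fin n → Fin m → Set (ℝ × (Fin n → ℕ))), (∀ i j, MeasurableSet (B i j)) →
      (μ {ω | S ω ∈ s ∧ (∀ l, N l ω = a l) ∧
          ∀ i, i < k → ∀ j : Fin m, (O i j ω, fun l => AO i j l ω) ∈ B i j}).toReal
        = (∫ x in s, ∏ l, poissonPMFReal (Real.toNNReal (lam l * x)) (a l) ∂(μ.map S)) *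
          ∏ i ∈ Finset.univ.filter (fun i => i < k), ∏ j : Fin m, (ν (B i j)).toReal)
    -- effective size and total arrival counts
    (R : Ω → ℝ)
    (hR : ∀ ω, R ω = S ω + ∑ i ∈ Finset.univ.filter (fun i => i < k),
        ∑ j ∈ Finset.range (N i ω), O i j ω)
    (A : Fin n → Ω → ℕ)
    (hA : ∀ l ω, A l ω = N l ω + ∑ i ∈ Finset.univ.filter (fun i => i < k),
        ∑ j ∈ Finset.range (N i ω), AO i j l ω)
    (θ : ℝ) (hθ : 0 ≤ θ) (z : Fin n → ℝ) (hz : ∀ i, z i ∈ Set.Icc (0 : ℝ) 1)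
    -- the common joint transform of a single overhead chain
    (g : ℝ)
    (hg : g = ∫ p, Real.exp (-(θ * p.1)) * ∏ l, (z l) ^ (p.2 l) ∂ν) :
    ∫ ω, Real.exp (-(θ * R ω)) * ∏ l, (z l) ^ (A l ω) ∂μ
      = ∫ ω, Real.exp (-((θ
            + (∑ i ∈ Finset.univ.filter (fun i => k ≤ i), lam i * (1 - z i))
            + (∑ i ∈ Finset.univ.filter (fun i => i < k), lam i * (1 - z i * g)))
          * S ω)) ∂μ := by
  classical
  have hz0 : ∀ i, 0 ≤ z i := fun i => (hz i).1
  have hz1 : ∀ i, z i ≤ 1 := fun i => (hz i).2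
  have hg0 : 0 ≤ g := by
    rw [hg]
    exact integral_nonneg fun p => mul_nonneg (Real.exp_nonneg _)
      (Finset.prod_nonneg fun l _ => pow_nonneg (hz0 l) _)
  set τ : Measure ℝ := μ.map S with hτdef
  set c : ℝ := θ + (∑ i ∈ Finset.univ.filter (fun i => k ≤ i), lam i * (1 - z i))
      + (∑ i ∈ Finset.univ.filter (fun i => i < k), lam i * (1 - z i * g)) with hcdef
  -- chain integrand
  have hchainMeas : Measurable fun p : ℝ × (Fin n → ℕ) =>
      Real.exp (-(θ * p.1)) * ∏ l, z l ^ p.2 l := by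
    refine Measurable.mul ?_ ?_
    · exact (Real.continuous_exp.measurable).comp
        ((measurable_const.mul measurable_fst).neg)
    · exact Finset.measurable_prod _ fun l _ =>
        (measurable_from_top (f := fun m : ℕ => z l ^ m)).comp
          ((measurable_pi_apply l).comp measurable_snd)
  have hνae : ∀ᵐ p ∂ν, 0 ≤ p.1 := by
    rw [ae_iff]
    convert hν using 2
    ext p; simp [not_le]
  have hchain_nn : ∀ p : ℝ × (Fin n → ℕ), 0 ≤ Real.exp (-(θ * p.1)) * ∏ l, z l ^ p.2 l :=
    fun p => mul_nonneg (Real.exp_nonneg _)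
      (Finset.prod_nonneg fun l _ => pow_nonneg (hz0 l) _)
  have hchain_le : ∀ p : ℝ × (Fin n → ℕ), 0 ≤ p.1 →
      Real.exp (-(θ * p.1)) * ∏ l, z l ^ p.2 l ≤ 1 := by
    intro p hp
    have h1 : Real.exp (-(θ * p.1)) ≤ 1 :=
      Real.exp_le_one_iff.mpr (neg_nonpos.mpr (mul_nonneg hθ hp))
    have h2 : (∏ l, z l ^ p.2 l) ≤ 1 :=
      Finset.prod_le_one (fun l _ => pow_nonneg (hz0 l) _)
        (fun l _ => pow_le_one₀ (hz0 l) (hz1 l))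
    calc Real.exp (-(θ * p.1)) * ∏ l, z l ^ p.2 l ≤ 1 * 1 :=
          mul_le_mul h1 h2 (Finset.prod_nonneg fun l _ => pow_nonneg (hz0 l) _) zero_le_one
      _ = 1 := by ring
  have hchainInt : Integrable (fun p : ℝ × (Fin n → ℕ) =>
      Real.exp (-(θ * p.1)) * ∏ l, z l ^ p.2 l) ν := by
    refine Integrable.mono' (integrable_const 1) hchainMeas.aestronglyMeasurable ?_
    filter_upwards [hνae] with p hp
    rw [Real.norm_eq_abs, abs_of_nonneg (hchain_nn p)]
    exact hchain_le p hp
  have hgE : ∫⁻ p, ENNReal.ofReal (Real.exp (-(θ * p.1)) * ∏ l, z l ^ p.2 l) ∂ν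
      = ENNReal.ofReal g := by
    rw [hg]
    exact (ofReal_integral_eq_lintegral_ofReal hchainInt
      (Filter.Eventually.of_forall hchain_nn)).symm
  -- measurability of R, A and the basic integrand
  have hRmeas : Measurable R := by
    have : R = fun ω => S ω + ∑ i ∈ Finset.univ.filter (fun i => i < k),
        ∑ j ∈ Finset.range (N i ω), O i j ω := funext hR
    rw [this]
    exact hS.add (Finset.measurable_sum _ fun i _ =>
      measurable_sum_range (hN i) (fun j => hO i j))
  have hAmeas : ∀ l, Measurable (A l) := by
    intro l
    have : A l = fun ω => N l ω + ∑ i ∈ Finset.univ.filter (fun i => i < k),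
        ∑ j ∈ Finset.range (N i ω), AO i j l ω := funext (hA l)
    rw [this]
    exact (hN l).add (Finset.measurable_sum _ fun i _ =>
      measurable_sum_range (hN i) (fun j => hAO i j l))
  have hfMeas : Measurable fun ω => Real.exp (-(θ * R ω)) * ∏ l, z l ^ A l ω := by
    refine Measurable.mul ?_ ?_
    · exact (Real.continuous_exp.measurable).comp ((measurable_const.mul hRmeas).neg)
    · exact Finset.measurable_prod _ fun l _ =>
        (measurable_from_top (f := fun m : ℕ => z l ^ m)).comp (hAmeas l)
  have hfnn : ∀ ω, 0 ≤ Real.exp (-(θ * R ω)) * ∏ l, z l ^ A l ω := fun ω =>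
    mul_nonneg (Real.exp_nonneg _) (Finset.prod_nonneg fun l _ => pow_nonneg (hz0 l) _)
  -- partition by the value of N
  set Na : (Fin n → ℕ) → Set Ω := fun a => {ω | ∀ l, N l ω = a l} with hNadef
  have hNaMeas : ∀ a, MeasurableSet (Na a) := by
    intro a
    have : Na a = ⋂ l, (N l) ⁻¹' {a l} := by ext ω; simp [hNadef, Set.mem_iInter]
    rw [this]
    exact MeasurableSet.iInter fun l => (hN l) (measurableSet_singleton _)
  have hNaU : ⋃ a, Na a = Set.univ := by
    ext ω
    simp only [Set.mem_iUnion, Set.mem_univ, iff_true]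
    exact ⟨fun l => N l ω, fun l => rfl⟩
  have hNaD : Pairwise (Function.onFun Disjoint Na) := by
    intro a b hab
    refine Set.disjoint_left.mpr fun ω ha hb => hab ?_
    funext l
    rw [← ha l, ← hb l]
  -- Poisson densities
  set pois : (Fin n → ℕ) → ℝ → ℝ := fun a x =>
    ∏ l, poissonPMFReal (Real.toNNReal (lam l * x)) (a l) with hpoisdef
  have hpoisMeas : ∀ a, Measurable (pois a) :=
    fun a => Finset.measurable_prod _ fun l _ => measurable_poisson_x (lam l) (a l)
  have hpoisNN : ∀ a x, 0 ≤ pois a x :=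
    fun a x => Finset.prod_nonneg fun l _ => poissonPMFReal_nonneg
  have hpoisLe : ∀ a x, pois a x ≤ 1 := fun a x =>
    Finset.prod_le_one (fun l _ => poissonPMFReal_nonneg)
      (fun l _ => poissonPMFReal_le_one _ _)
  set ρ : (Fin n → ℕ) → Measure ℝ := fun a =>
    τ.withDensity fun x => ENNReal.ofReal (pois a x) with hρdef
  have hτprob : IsProbabilityMeasure τ := Measure.isProbabilityMeasure_map hS.aemeasurable
  have hρle : ∀ a (s : Set ℝ), MeasurableSet s → ρ a s ≤ 1 := by
    intro a s hs
    rw [hρdef]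
    dsimp only
    rw [withDensity_apply _ hs]
    calc ∫⁻ x in s, ENNReal.ofReal (pois a x) ∂τ ≤ ∫⁻ _ in s, 1 ∂τ :=
          lintegral_mono fun x => ENNReal.ofReal_le_one.mpr (hpoisLe a x)
      _ = τ s := by simp
      _ ≤ 1 := prob_le_one
  have hρfin : ∀ a, IsFiniteMeasure (ρ a) := by
    intro a
    constructor
    exact lt_of_le_of_lt (hρle a Set.univ MeasurableSet.univ) ENNReal.one_lt_top
  -- target integrand components
  set D : Fin n → ℝ := fun l => if l < k then g else 1 with hDdef
  have hD0 : ∀ l, 0 ≤ D l := by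
    intro l; rw [hDdef]; dsimp only; split <;> [exact hg0; norm_num]
  set T : (Fin n → ℕ) → ℝ → ℝ≥0∞ := fun a x =>
    ENNReal.ofReal (Real.exp (-(θ * x))) *
      ∏ l, ((ENNReal.ofReal (z l * D l)) ^ (a l) *
        ENNReal.ofReal (poissonPMFReal (Real.toNNReal (lam l * x)) (a l))) with hTdef
  -- the key per-class computation
  have H2 : ∀ a, (∫⁻ ω in Na a,
      ENNReal.ofReal (Real.exp (-(θ * R ω)) * ∏ l, z l ^ A l ω) ∂μ) = ∫⁻ x, T a x ∂τ := by
    intro a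
    haveI : IsFiniteMeasure (ρ a) := hρfin a
    set M : ℕ := Finset.univ.sup a with hMdef
    have haM : ∀ i : Fin n, a i ≤ M := fun i => Finset.le_sup (Finset.mem_univ i)
    set Φ : Ω → ℝ × (({i : Fin n // i < k} × Fin M) → ℝ × (Fin n → ℕ)) := fun ω =>
      (S ω, fun p => (O p.1.1 p.2 ω, fun l => AO p.1.1 p.2 l ω)) with hΦdef
    have hΦ : Measurable Φ := by
      refine Measurable.prodMk hS ?_
      refine measurable_pi_lambda _ fun p => ?_
      exact Measurable.prodMk (hO _ _) (measurable_pi_lambda _ fun l => hAO _ _ _)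
    set κ : Measure (ℝ × (({i : Fin n // i < k} × Fin M) → ℝ × (Fin n → ℕ))) :=
      (μ.restrict (Na a)).map Φ with hκdef
    set piM : Measure (({i : Fin n // i < k} × Fin M) → ℝ × (Fin n → ℕ)) :=
      Measure.pi (fun _ => ν) with hpiMdef
    haveI : IsFiniteMeasure κ := by
      constructor
      rw [hκdef, Measure.map_apply hΦ MeasurableSet.univ, Set.preimage_univ,
        Measure.restrict_apply_univ]
      exact measure_lt_top μ _
    have hbox : ∀ (s : Set ℝ), MeasurableSet s →
        ∀ (B : ({i : Fin n // i < k} × Fin M) → Set (ℝ × (Fin n → ℕ))),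
        (∀ p, MeasurableSet (B p)) →
        κ (s ×ˢ Set.pi Set.univ B) = ρ a s * ∏ p, ν (B p) := by
      intro s hs B hB
      set B' : Fin n → Fin M → Set (ℝ × (Fin n → ℕ)) := fun i j =>
        if h : i < k then B (⟨i, h⟩, j) else Set.univ with hB'def
      have hB'm : ∀ i j, MeasurableSet (B' i j) := by
        intro i j
        rw [hB'def]
        dsimp only
        split
        · exact hB _
        · exact MeasurableSet.univ
      have hBox_m : MeasurableSet (s ×ˢ Set.pi Set.univ B) :=
        hs.prod (MeasurableSet.univ_pi hB)
      have hsetEq : Φ ⁻¹' (s ×ˢ Set.pi Set.univ B) ∩ Na a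
          = {ω | S ω ∈ s ∧ (∀ l, N l ω = a l) ∧
              ∀ i, i < k → ∀ j : Fin M, (O i j ω, fun l => AO i j l ω) ∈ B' i j} := by
        ext ω
        simp only [Set.mem_inter_iff, Set.mem_preimage, hΦdef, Set.mem_prod, Set.mem_pi,
          Set.mem_univ, forall_true_left, Set.mem_setOf_eq, hNadef]
        constructor
        · rintro ⟨⟨h1, h2⟩, h3⟩
          refine ⟨h1, h3, fun i hik j => ?_⟩
          rw [hB'def]
          dsimp only
          rw [dif_pos hik]
          exact h2 (⟨i, hik⟩, j)
        · rintro ⟨h1, h3, h2⟩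
          refine ⟨⟨h1, fun p => ?_⟩, h3⟩
          have hh := h2 p.1.1 p.1.2 p.2
          rw [hB'def] at hh
          dsimp only at hh
          rw [dif_pos p.1.2] at hh
          exact hh
      have hmap : κ (s ×ˢ Set.pi Set.univ B)
          = μ {ω | S ω ∈ s ∧ (∀ l, N l ω = a l) ∧
              ∀ i, i < k → ∀ j : Fin M, (O i j ω, fun l => AO i j l ω) ∈ B' i j} := by
        rw [hκdef, Measure.map_apply hΦ hBox_m, Measure.restrict_apply (hΦ hBox_m), hsetEq]
      have hjr := hJoint s hs a M B' hB'm
      have hfac1 : ∫ x in s, pois a x ∂τ = (ρ a s).toReal := by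
        rw [integral_eq_lintegral_of_nonneg_ae
          (Filter.Eventually.of_forall fun x => hpoisNN a x)
          (hpoisMeas a).aestronglyMeasurable]
        congr 1
        rw [hρdef]
        dsimp only
        rw [withDensity_apply _ hs]
      have hfac2 : (∏ i ∈ Finset.univ.filter (fun i => i < k),
          ∏ j : Fin M, (ν (B' i j)).toReal)
            = ∏ p : {i : Fin n // i < k} × Fin M, (ν (B p)).toReal := by
        rw [Fintype.prod_prod_type (f := fun p : {i : Fin n // i < k} × Fin M =>
          (ν (B p)).toReal)]
        rw [Finset.prod_subtype (Finset.univ.filter (fun i : Fin n => i < k))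
          (p := fun i : Fin n => i < k) (by simp)
          (fun i => ∏ j : Fin M, (ν (B' i j)).toReal)]
        refine Finset.prod_congr rfl fun i _ => Finset.prod_congr rfl fun j _ => ?_
        rw [hB'def]
        dsimp only
        rw [dif_pos i.2]
      have hne2 : ρ a s * ∏ p, ν (B p) ≠ ⊤ := by
        refine ENNReal.mul_ne_top ?_ ?_
        · exact ne_top_of_le_ne_top ENNReal.one_ne_top (hρle a s hs)
        · exact (ENNReal.prod_lt_top fun p _ => measure_lt_top ν _).ne
      rw [hmap]
      refine (ENNReal.toReal_eq_toReal_iff' (measure_ne_top μ _) hne2).mp ?_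
      rw [hjr, hfac1, hfac2, ENNReal.toReal_mul, ENNReal.toReal_prod]
    have hid : κ = (ρ a).prod piM := by
      refine MeasureTheory.ext_of_generate_finite
        (Set.image2 (· ×ˢ ·) {s : Set ℝ | MeasurableSet s}
          (Set.pi Set.univ '' Set.pi Set.univ fun _ : {i : Fin n // i < k} × Fin M =>
            {t : Set (ℝ × (Fin n → ℕ)) | MeasurableSet t}))
        ?_ ?_ ?_ ?_
      · exact (generateFrom_eq_prod MeasurableSpace.generateFrom_measurableSet
          generateFrom_pi isCountablySpanning_measurableSet
          (IsCountablySpanning.pi fun _ => isCountablySpanning_measurableSet)).symm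
      · exact IsPiSystem.prod MeasurableSpace.isPiSystem_measurableSet isPiSystem_pi
      · rintro t ⟨s, hs, t2, ⟨B, hB, rfl⟩, rfl⟩
        rw [hbox s hs B (fun p => hB p (Set.mem_univ p)), Measure.prod_prod, hpiMdef,
          Measure.pi_pi]
      · have h1 := hbox Set.univ MeasurableSet.univ (fun _ => Set.univ)
          (fun _ => MeasurableSet.univ)
        rw [Set.pi_univ, Set.univ_prod_univ] at h1
        rw [h1]
        have h2 : (ρ a).prod piM Set.univ = ρ a Set.univ * piM Set.univ := by
          rw [← Set.univ_prod_univ, Measure.prod_prod]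
        rw [h2]
        congr 1
        haveI : IsProbabilityMeasure piM := by rw [hpiMdef]; infer_instance
        rw [measure_univ]
        simp [measure_univ]
    -- the factorized integrand
    set u : ℝ → ℝ≥0∞ := fun x =>
      ENNReal.ofReal (Real.exp (-(θ * x)) * ∏ l, z l ^ a l) with hudef
    set hfun : ({i : Fin n // i < k} × Fin M) → (ℝ × (Fin n → ℕ)) → ℝ≥0∞ := fun p e =>
      if (p.2 : ℕ) < a p.1.1
        then ENNReal.ofReal (Real.exp (-(θ * e.1)) * ∏ l, z l ^ e.2 l) else 1 with hhdef
    have humeas : Measurable u := by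
      refine ENNReal.measurable_ofReal.comp ?_
      exact ((Real.continuous_exp.measurable).comp
        ((measurable_const.mul measurable_id).neg)).mul measurable_const
    have hhm : ∀ p, Measurable (hfun p) := by
      intro p
      rw [hhdef]
      dsimp only
      split
      · exact ENNReal.measurable_ofReal.comp hchainMeas
      · exact measurable_const
    have hprodm : Measurable fun y : ({i : Fin n // i < k} × Fin M) → ℝ × (Fin n → ℕ) =>
        ∏ p, hfun p (y p) :=
      Finset.measurable_prod _ fun p _ => (hhm p).comp (measurable_pi_apply p)
    have hbig : Measurable fun y : ℝ × (({i : Fin n // i < k} × Fin M) → ℝ × (Fin n → ℕ)) =>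
        u y.1 * ∏ p, hfun p (y.2 p) :=
      (humeas.comp measurable_fst).mul (hprodm.comp measurable_snd)
    have hchain_nn' : ∀ (x : ℝ) (v : Fin n → ℕ),
        0 ≤ Real.exp (-(θ * x)) * ∏ l, z l ^ v l := fun x v =>
      mul_nonneg (Real.exp_nonneg _)
        (Finset.prod_nonneg fun l _ => pow_nonneg (hz0 l) _)
    have hchain_prod_eq : ∀ ω, (∏ p, hfun p ((Φ ω).2 p))
        = ∏ i ∈ Finset.univ.filter (fun i : Fin n => i < k), ∏ j ∈ Finset.range (a i),
            ENNReal.ofReal (Real.exp (-(θ * O i j ω)) * ∏ l, z l ^ AO i j l ω) := by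
      intro ω
      rw [Fintype.prod_prod_type (f := fun p : {i : Fin n // i < k} × Fin M =>
        hfun p ((Φ ω).2 p))]
      have h1 : ∀ i : {i : Fin n // i < k}, (∏ j : Fin M, hfun (i, j) ((Φ ω).2 (i, j)))
          = ∏ j ∈ Finset.range (a i.1),
              ENNReal.ofReal (Real.exp (-(θ * O i.1 j ω)) * ∏ l, z l ^ AO i.1 j l ω) := by
        intro i
        have heq : ∀ j : Fin M, hfun (i, j) ((Φ ω).2 (i, j))
            = (if (j : ℕ) < a i.1 then
                ENNReal.ofReal (Real.exp (-(θ * O i.1 (j : ℕ) ω)) *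
                  ∏ l, z l ^ AO i.1 (j : ℕ) l ω) else 1) := by
          intro j
          rw [hhdef, hΦdef]
        rw [Finset.prod_congr rfl (fun j _ => heq j)]
        exact prod_fin_ite (haM i.1)
          (fun j => ENNReal.ofReal (Real.exp (-(θ * O i.1 j ω)) * ∏ l, z l ^ AO i.1 j l ω))
      rw [Finset.prod_congr rfl (fun i _ => h1 i)]
      rw [Finset.prod_subtype (Finset.univ.filter (fun i : Fin n => i < k))
        (p := fun i : Fin n => i < k) (by simp)
        (fun i => ∏ j ∈ Finset.range (a i),
          ENNReal.ofReal (Real.exp (-(θ * O i j ω)) * ∏ l, z l ^ AO i j l ω))]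
    have hreal : ∀ ω, ω ∈ Na a →
        Real.exp (-(θ * R ω)) * ∏ l, z l ^ A l ω
          = (Real.exp (-(θ * S ω)) * ∏ l, z l ^ a l) *
            ∏ i ∈ Finset.univ.filter (fun i : Fin n => i < k), ∏ j ∈ Finset.range (a i),
              (Real.exp (-(θ * O i j ω)) * ∏ l, z l ^ AO i j l ω) := by
      intro ω hω
      have hωl : ∀ l, N l ω = a l := hω
      have hRω : R ω = S ω + ∑ i ∈ Finset.univ.filter (fun i : Fin n => i < k),
          ∑ j ∈ Finset.range (a i), O i j ω := by
        rw [hR ω]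
        congr 1
        exact Finset.sum_congr rfl fun i _ => by rw [hωl i]
      have hAω : ∀ l, A l ω = a l + ∑ i ∈ Finset.univ.filter (fun i : Fin n => i < k),
          ∑ j ∈ Finset.range (a i), AO i j l ω := by
        intro l
        rw [hA l ω, hωl l]
        congr 1
        exact Finset.sum_congr rfl fun i _ => by rw [hωl i]
      have hexp : Real.exp (-(θ * R ω)) = Real.exp (-(θ * S ω)) *
          ∏ i ∈ Finset.univ.filter (fun i : Fin n => i < k), ∏ j ∈ Finset.range (a i),
            Real.exp (-(θ * O i j ω)) := by
        rw [hRω]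
        have hexpand : -(θ * (S ω + ∑ i ∈ Finset.univ.filter (fun i : Fin n => i < k),
            ∑ j ∈ Finset.range (a i), O i j ω))
              = -(θ * S ω) + ∑ i ∈ Finset.univ.filter (fun i : Fin n => i < k),
                ∑ j ∈ Finset.range (a i), (-(θ * O i j ω)) := by
          rw [mul_add, neg_add, Finset.mul_sum, ← Finset.sum_neg_distrib]
          congr 1
          refine Finset.sum_congr rfl fun i _ => ?_
          rw [Finset.mul_sum, ← Finset.sum_neg_distrib]
        rw [hexpand, Real.exp_add]
        congr 1
        rw [Real.exp_sum]
        exact Finset.prod_congr rfl fun i _ => Real.exp_sum _ _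
      have hpow : ∀ l, z l ^ A l ω = z l ^ a l *
          ∏ i ∈ Finset.univ.filter (fun i : Fin n => i < k), ∏ j ∈ Finset.range (a i),
            z l ^ AO i j l ω := by
        intro l
        rw [hAω l, pow_add]
        congr 1
        rw [← Finset.prod_pow_eq_pow_sum]
        exact Finset.prod_congr rfl fun i _ => (Finset.prod_pow_eq_pow_sum _ _ _).symm
      have hR2 : (∏ i ∈ Finset.univ.filter (fun i : Fin n => i < k),
          ∏ j ∈ Finset.range (a i),
            (Real.exp (-(θ * O i j ω)) * ∏ l, z l ^ AO i j l ω))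
          = (∏ i ∈ Finset.univ.filter (fun i : Fin n => i < k),
              ∏ j ∈ Finset.range (a i), Real.exp (-(θ * O i j ω))) *
            (∏ i ∈ Finset.univ.filter (fun i : Fin n => i < k),
              ∏ j ∈ Finset.range (a i), ∏ l, z l ^ AO i j l ω) := by
        rw [← Finset.prod_mul_distrib]
        exact Finset.prod_congr rfl fun i _ => Finset.prod_mul_distrib
      have hswap : (∏ l, ∏ i ∈ Finset.univ.filter (fun i : Fin n => i < k),
          ∏ j ∈ Finset.range (a i), z l ^ AO i j l ω)
            = ∏ i ∈ Finset.univ.filter (fun i : Fin n => i < k),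
              ∏ j ∈ Finset.range (a i), ∏ l, z l ^ AO i j l ω := by
        rw [Finset.prod_comm]
        exact Finset.prod_congr rfl fun i _ => Finset.prod_comm
      rw [hexp, Finset.prod_congr rfl (fun l _ => hpow l), Finset.prod_mul_distrib,
        hR2, ← hswap]
      ring
    have hstep : ∀ ω, ω ∈ Na a →
        ENNReal.ofReal (Real.exp (-(θ * R ω)) * ∏ l, z l ^ A l ω)
          = u (Φ ω).1 * ∏ p, hfun p ((Φ ω).2 p) := by
      intro ω hω
      rw [hreal ω hω]
      rw [ENNReal.ofReal_mul (hchain_nn' (S ω) a)]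
      rw [hchain_prod_eq ω]
      congr 1
      rw [ENNReal.ofReal_prod_of_nonneg (fun i _ => Finset.prod_nonneg fun j _ =>
        hchain_nn' (O i j ω) (fun l => AO i j l ω))]
      exact Finset.prod_congr rfl fun i _ =>
        ENNReal.ofReal_prod_of_nonneg (fun j _ => hchain_nn' (O i j ω) (fun l => AO i j l ω))
    have hint : ∀ p : {i : Fin n // i < k} × Fin M,
        ∫⁻ e, hfun p e ∂ν = if (p.2 : ℕ) < a p.1.1 then ENNReal.ofReal g else 1 := by
      intro p
      rw [hhdef]
      dsimp only
      split
      · exact hgE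
      · simp
    have hC : (∏ p : {i : Fin n // i < k} × Fin M,
        if (p.2 : ℕ) < a p.1.1 then ENNReal.ofReal g else 1)
          = ∏ l, (ENNReal.ofReal (D l)) ^ (a l) := by
      rw [Fintype.prod_prod_type (f := fun p : {i : Fin n // i < k} × Fin M =>
        if (p.2 : ℕ) < a p.1.1 then ENNReal.ofReal g else 1)]
      have h1 : ∀ i : {i : Fin n // i < k},
          (∏ j : Fin M, if (j : ℕ) < a i.1 then ENNReal.ofReal g else 1)
            = (ENNReal.ofReal g) ^ (a i.1) := by
        intro i
        rw [prod_fin_ite (haM i.1) (fun _ => ENNReal.ofReal g), Finset.prod_const,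
          Finset.card_range]
      rw [Finset.prod_congr rfl (fun i _ => h1 i)]
      rw [← Finset.prod_subtype (Finset.univ.filter (fun i : Fin n => i < k))
        (p := fun i : Fin n => i < k) (by simp) (fun i => (ENNReal.ofReal g) ^ (a i))]
      rw [Finset.prod_filter]
      refine Finset.prod_congr rfl fun l _ => ?_
      rw [hDdef]
      dsimp only
      split
      · rfl
      · rw [ENNReal.ofReal_one, one_pow]
    have hdm : Measurable fun x => ENNReal.ofReal (pois a x) :=
      ENNReal.measurable_ofReal.comp (hpoisMeas a)
    have hρint : ∫⁻ x, u x ∂(ρ a) = ∫⁻ x, ENNReal.ofReal (pois a x) * u x ∂τ := by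
      rw [hρdef]
      dsimp only
      rw [lintegral_withDensity_eq_lintegral_mul τ hdm humeas]
      rfl
    have hmeasmul : Measurable fun x => ENNReal.ofReal (pois a x) * u x := hdm.mul humeas
    have hpt : ∀ x : ℝ,
        (ENNReal.ofReal (pois a x) * u x) * ∏ l, (ENNReal.ofReal (D l)) ^ (a l) = T a x := by
      intro x
      rw [hTdef, hudef, hpoisdef]
      dsimp only
      have e1 : ∀ l : Fin n, ENNReal.ofReal (z l ^ a l) = (ENNReal.ofReal (z l)) ^ (a l) :=
        fun l => ENNReal.ofReal_pow (hz0 l) _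
      have e2 : ∀ l : Fin n, ENNReal.ofReal (z l * D l)
          = ENNReal.ofReal (z l) * ENNReal.ofReal (D l) :=
        fun l => ENNReal.ofReal_mul (hz0 l)
      rw [ENNReal.ofReal_prod_of_nonneg (fun l _ => poissonPMFReal_nonneg),
        ENNReal.ofReal_mul (Real.exp_nonneg _),
        ENNReal.ofReal_prod_of_nonneg (fun l _ => pow_nonneg (hz0 l) _)]
      simp only [e1, e2, mul_pow]
      rw [Finset.prod_mul_distrib, Finset.prod_mul_distrib]
      ring
    calc ∫⁻ ω in Na a, ENNReal.ofReal (Real.exp (-(θ * R ω)) * ∏ l, z l ^ A l ω) ∂μ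
        = ∫⁻ ω in Na a, u (Φ ω).1 * ∏ p, hfun p ((Φ ω).2 p) ∂μ :=
          setLIntegral_congr_fun (hNaMeas a) hstep
      _ = ∫⁻ y, u y.1 * ∏ p, hfun p (y.2 p) ∂κ := by
          rw [hκdef]
          exact (lintegral_map hbig hΦ).symm
      _ = ∫⁻ y, u y.1 * ∏ p, hfun p (y.2 p) ∂((ρ a).prod piM) := by rw [hid]
      _ = (∫⁻ x, u x ∂(ρ a)) * ∫⁻ y, ∏ p, hfun p (y p) ∂piM :=
          lintegral_prod_mul humeas.aemeasurable hprodm.aemeasurable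
      _ = (∫⁻ x, u x ∂(ρ a)) * ∏ p, ∫⁻ e, hfun p e ∂ν := by
          rw [hpiMdef, lintegral_fintype_prod_eq_prod ν hhm]
      _ = (∫⁻ x, u x ∂(ρ a)) * ∏ l, (ENNReal.ofReal (D l)) ^ (a l) := by
          rw [Finset.prod_congr rfl (fun p _ => hint p), hC]
      _ = ∫⁻ x, (ENNReal.ofReal (pois a x) * u x) * ∏ l, (ENNReal.ofReal (D l)) ^ (a l) ∂τ := by
          rw [hρint, ← lintegral_mul_const _ hmeasmul]
      _ = ∫⁻ x, T a x ∂τ := lintegral_congr hpt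
  -- pointwise summation over a
  have hptw : ∀ x : ℝ, 0 ≤ x → ∑' a, T a x = ENNReal.ofReal (Real.exp (-(c * x))) := by
    intro x hx
    have hw0 : ∀ l, 0 ≤ z l * D l := fun l => mul_nonneg (hz0 l) (hD0 l)
    have key : ∀ l : Fin n, (∑' m : ℕ, ((ENNReal.ofReal (z l * D l)) ^ m *
        ENNReal.ofReal (poissonPMFReal (Real.toNNReal (lam l * x)) m)))
          = ENNReal.ofReal (Real.exp (-(lam l * x * (1 - z l * D l)))) := by
      intro l
      have hr : ((Real.toNNReal (lam l * x) : ℝ≥0) : ℝ) = lam l * x :=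
        Real.coe_toNNReal _ (mul_nonneg (hlam l).le hx)
      have hsummand : ∀ m : ℕ, (ENNReal.ofReal (z l * D l)) ^ m *
          ENNReal.ofReal (poissonPMFReal (Real.toNNReal (lam l * x)) m)
            = ENNReal.ofReal ((z l * D l) ^ m *
                poissonPMFReal (Real.toNNReal (lam l * x)) m) := by
        intro m
        rw [← ENNReal.ofReal_pow (hw0 l), ← ENNReal.ofReal_mul (pow_nonneg (hw0 l) m)]
      simp_rw [hsummand]
      have hsum := poisson_gen (Real.toNNReal (lam l * x)) (z l * D l)
      rw [← ENNReal.ofReal_tsum_of_nonneg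
        (fun m => mul_nonneg (pow_nonneg (hw0 l) m) poissonPMFReal_nonneg) hsum.summable,
        hsum.tsum_eq, hr]
    calc ∑' a, T a x
        = ∑' a : Fin n → ℕ, (ENNReal.ofReal (Real.exp (-(θ * x))) *
            ∏ l, ((ENNReal.ofReal (z l * D l)) ^ (a l) *
              ENNReal.ofReal (poissonPMFReal (Real.toNNReal (lam l * x)) (a l)))) := rfl
      _ = ENNReal.ofReal (Real.exp (-(θ * x))) * ∑' a : Fin n → ℕ,
            ∏ l, ((ENNReal.ofReal (z l * D l)) ^ (a l) *
              ENNReal.ofReal (poissonPMFReal (Real.toNNReal (lam l * x)) (a l))) :=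
          ENNReal.tsum_mul_left
      _ = ENNReal.ofReal (Real.exp (-(θ * x))) * ∏ l, ∑' m : ℕ,
            ((ENNReal.ofReal (z l * D l)) ^ m *
              ENNReal.ofReal (poissonPMFReal (Real.toNNReal (lam l * x)) m)) := by
          rw [tsum_pi_nat_prod (fun l m => (ENNReal.ofReal (z l * D l)) ^ m *
            ENNReal.ofReal (poissonPMFReal (Real.toNNReal (lam l * x)) m))]
      _ = ENNReal.ofReal (Real.exp (-(θ * x))) * ∏ l,
            ENNReal.ofReal (Real.exp (-(lam l * x * (1 - z l * D l)))) := by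
          congr 1
          exact Finset.prod_congr rfl fun l _ => key l
      _ = ENNReal.ofReal (Real.exp (-(c * x))) := by
          rw [← ENNReal.ofReal_prod_of_nonneg (fun l _ => Real.exp_nonneg _),
            ← ENNReal.ofReal_mul (Real.exp_nonneg _)]
          congr 1
          rw [← Real.exp_sum, ← Real.exp_add]
          congr 1
          have hsplit : ∑ l, -(lam l * x * (1 - z l * D l))
              = -((∑ i ∈ Finset.univ.filter (fun i => i < k), lam i * (1 - z i * g)) * x
                  + (∑ i ∈ Finset.univ.filter (fun i => k ≤ i), lam i * (1 - z i)) * x) := by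
            rw [← Finset.sum_filter_add_sum_filter_not Finset.univ (fun l => l < k)
              (fun l => -(lam l * x * (1 - z l * D l)))]
            have e1 : ∑ l ∈ Finset.univ.filter (fun l => l < k),
                -(lam l * x * (1 - z l * D l))
                  = -((∑ i ∈ Finset.univ.filter (fun i => i < k),
                      lam i * (1 - z i * g)) * x) := by
              rw [Finset.sum_mul, ← Finset.sum_neg_distrib]
              refine Finset.sum_congr rfl fun l hl => ?_
              have hlk : l < k := (Finset.mem_filter.mp hl).2
              rw [hDdef]
              simp only [if_pos hlk]
              ring
            have e2 : ∑ l ∈ Finset.univ.filter (fun l => ¬ l < k),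
                -(lam l * x * (1 - z l * D l))
                  = -((∑ i ∈ Finset.univ.filter (fun i => k ≤ i),
                      lam i * (1 - z i)) * x) := by
              have hfe : Finset.univ.filter (fun l : Fin n => ¬ l < k)
                  = Finset.univ.filter (fun l : Fin n => k ≤ l) := by
                apply Finset.filter_congr
                intro l _
                simp [not_lt]
              rw [hfe, Finset.sum_mul, ← Finset.sum_neg_distrib]
              refine Finset.sum_congr rfl fun l hl => ?_
              have hlk : ¬ l < k := not_lt.mpr (Finset.mem_filter.mp hl).2
              rw [hDdef]
              simp only [if_neg hlk]
              ring
            rw [e1, e2]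
            ring
          rw [hsplit, hcdef]
          ring
  have hTmeas : ∀ a, Measurable (T a) := by
    intro a
    refine Measurable.mul ?_ ?_
    · exact (ENNReal.measurable_ofReal.comp
        ((Real.continuous_exp.measurable).comp ((measurable_const.mul measurable_id).neg)))
    · exact Finset.measurable_prod _ fun l _ => (measurable_const.pow measurable_const).mul
        (ENNReal.measurable_ofReal.comp (measurable_poisson_x (lam l) (a l)))
  have hτae : ∀ᵐ x ∂τ, 0 ≤ x := by
    rw [hτdef, ae_iff]
    have hms : MeasurableSet {x : ℝ | ¬ 0 ≤ x} := by
      have : {x : ℝ | ¬ 0 ≤ x} = {x : ℝ | x < 0} := by ext x; simp [not_le]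
      rw [this]
      exact measurableSet_lt measurable_id measurable_const
    have hemp : S ⁻¹' {x | ¬ 0 ≤ x} = ∅ := by
      ext ω; simp [hSnonneg ω]
    rw [Measure.map_apply hS hms, hemp]
    exact measure_empty
  -- put everything together
  have hL : ∫ ω, Real.exp (-(θ * R ω)) * ∏ l, (z l) ^ (A l ω) ∂μ
      = (∫⁻ ω, ENNReal.ofReal (Real.exp (-(θ * R ω)) * ∏ l, z l ^ A l ω) ∂μ).toReal := by
    rw [integral_eq_lintegral_of_nonneg_ae (Filter.Eventually.of_forall hfnn)
      hfMeas.aestronglyMeasurable]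
  have hRt : ∫ ω, Real.exp (-(c * S ω)) ∂μ
      = (∫⁻ x, ENNReal.ofReal (Real.exp (-(c * x))) ∂τ).toReal := by
    rw [integral_eq_lintegral_of_nonneg_ae (f := fun ω => Real.exp (-(c * S ω)))
      (Filter.Eventually.of_forall fun ω => Real.exp_nonneg _)
      (((Real.continuous_exp.measurable).comp
        ((measurable_const.mul hS).neg)).aestronglyMeasurable)]
    congr 1
    have hmeas2 : Measurable fun x : ℝ => ENNReal.ofReal (Real.exp (-(c * x))) :=
      ENNReal.measurable_ofReal.comp
        ((Real.continuous_exp.measurable).comp ((measurable_const.mul measurable_id).neg))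
    rw [hτdef, lintegral_map hmeas2 hS]
  rw [hL, hRt]
  congr 1
  calc ∫⁻ ω, ENNReal.ofReal (Real.exp (-(θ * R ω)) * ∏ l, z l ^ A l ω) ∂μ
      = ∑' a, ∫⁻ ω in Na a,
          ENNReal.ofReal (Real.exp (-(θ * R ω)) * ∏ l, z l ^ A l ω) ∂μ := by
        rw [← setLIntegral_univ, ← hNaU, lintegral_iUnion hNaMeas hNaD]
    _ = ∑' a, ∫⁻ x, T a x ∂τ := by
        exact tsum_congr fun a => H2 a
    _ = ∫⁻ x, ∑' a, T a x ∂τ := (lintegral_tsum fun a => (hTmeas a).aemeasurable).symm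
    _ = ∫⁻ x, ENNReal.ofReal (Real.exp (-(c * x))) ∂τ := by
        refine lintegral_congr_ae ?_
        filter_upwards [hτae] with x hx
        exact hptw x hx
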